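/- Fix σ, σ' > 0. Let ρ* ∈ [0,1), ρ ∈ (-1,1), γ ∈ [0,1), and let ρ_new ∈ (-1,1) be a point lying on the closed segment between ρ* and ρ with |ρ_new - ρ*| ≤ γ·|ρ - ρ*|. Set m = max{ρ*, |ρ|} and l = 1 - (1-γ)·(1 - m²)²/(1 + m²). Then l < 1 and |Ξ(ρ_new, σ, σ') - Ξ(ρ*, σ, σ')| ≤ l · |Ξ(ρ, σ, σ') - Ξ(ρ*, σ, σ')|. -/

import Mathlib

/-- The optimality coefficient `Ξ(ρ, σ, σ') = ρ / (σσ'(1 - ρ²))`. -/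
noncomputable def Xi (ρ σ σ' : ℝ) : ℝ := ρ / (σ * σ' * (1 - ρ ^ 2))

private lemma Xi_eq (a σ σ' : ℝ) : Xi a σ σ' = (a / (1 - a ^ 2)) / (σ * σ') := by
  unfold Xi; rw [div_div, mul_comm]

private lemma fdiff (a b : ℝ) (ha : a ^ 2 < 1) (hb : b ^ 2 < 1) :
    a / (1 - a ^ 2) - b / (1 - b ^ 2)
      = (a - b) * (1 + a * b) / ((1 - a ^ 2) * (1 - b ^ 2)) := by
  have h1 : 1 - a ^ 2 ≠ 0 := by nlinarith
  have h2 : 1 - b ^ 2 ≠ 0 := by nlinarith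
  field_simp
  ring

private lemma lower_bound (a b : ℝ) (ha : a ^ 2 < 1) (hb : b ^ 2 < 1) :
    |a - b| ≤ |a / (1 - a ^ 2) - b / (1 - b ^ 2)| := by
  have h1 : 0 < 1 - a ^ 2 := by linarith
  have h2 : 0 < 1 - b ^ 2 := by linarith
  have hab : 0 < 1 + a * b := by nlinarith [sq_nonneg (a + b)]
  rw [fdiff a b ha hb, abs_div, abs_mul, abs_of_pos hab, abs_of_pos (mul_pos h1 h2),
    le_div_iff₀ (mul_pos h1 h2)]
  have hkey : (1 - a ^ 2) * (1 - b ^ 2) ≤ 1 + a * b := by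
    nlinarith [sq_nonneg (a + b), mul_nonneg (sq_nonneg a) h2.le,
      mul_nonneg (sq_nonneg b) h1.le]
  exact mul_le_mul_of_nonneg_left hkey (abs_nonneg _)

private lemma upper_bound (a b m : ℝ) (hm : m ^ 2 < 1)
    (ha : a ^ 2 ≤ m ^ 2) (hb : b ^ 2 ≤ m ^ 2) :
    |a / (1 - a ^ 2) - b / (1 - b ^ 2)|
      ≤ (1 + m ^ 2) / (1 - m ^ 2) ^ 2 * |a - b| := by
  have ha1 : a ^ 2 < 1 := lt_of_le_of_lt ha hm
  have hb1 : b ^ 2 < 1 := lt_of_le_of_lt hb hm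
  have h1 : 0 < 1 - a ^ 2 := by linarith
  have h2 : 0 < 1 - b ^ 2 := by linarith
  have hmp : 0 < (1 - m ^ 2) ^ 2 := by nlinarith
  have hab : 0 < 1 + a * b := by nlinarith [sq_nonneg (a + b)]
  have habm : a * b ≤ m ^ 2 := by nlinarith [sq_nonneg (a - b)]
  have hprod : (1 - m ^ 2) * (1 - m ^ 2) ≤ (1 - a ^ 2) * (1 - b ^ 2) :=
    mul_le_mul (by linarith) (by linarith) (by linarith) (by linarith)
  have key : (1 + a * b) / ((1 - a ^ 2) * (1 - b ^ 2)) ≤ (1 + m ^ 2) / (1 - m ^ 2) ^ 2 := by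
    rw [div_le_div_iff₀ (mul_pos h1 h2) hmp]
    nlinarith [hprod, mul_le_mul_of_nonneg_right habm hmp.le,
      mul_le_mul_of_nonneg_left hprod (by linarith : (0:ℝ) ≤ 1 + m ^ 2)]
  rw [fdiff a b ha1 hb1, abs_div, abs_mul, abs_of_pos hab, abs_of_pos (mul_pos h1 h2),
    mul_div_assoc]
  calc |a - b| * ((1 + a * b) / ((1 - a ^ 2) * (1 - b ^ 2)))
      ≤ |a - b| * ((1 + m ^ 2) / (1 - m ^ 2) ^ 2) :=
        mul_le_mul_of_nonneg_left key (abs_nonneg _)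
    _ = (1 + m ^ 2) / (1 - m ^ 2) ^ 2 * |a - b| := by ring

private lemma abs_add_same_sign (x y : ℝ) (h : 0 ≤ x * y) : |x + y| = |x| + |y| := by
  rcases le_or_gt 0 x with hx | hx
  · rcases le_or_gt 0 y with hy | hy
    · rw [abs_of_nonneg hx, abs_of_nonneg hy, abs_of_nonneg (by linarith)]
    · have hx0 : x = 0 := by nlinarith
      simp [hx0]
  · rcases le_or_gt 0 y with hy | hy
    · have hy0 : y = 0 := by nlinarith
      simp [hy0]
    · rw [abs_of_neg hx, abs_of_neg hy, abs_of_neg (by linarith)]; ring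

set_option maxHeartbeats 1000000 in
/-- Fix `σ, σ' > 0`. Let `ρ* ∈ [0,1)`, `ρ ∈ (-1,1)`, `γ ∈ [0,1)` and let
`ρ_new ∈ (-1,1)` lie on the closed segment between `ρ*` and `ρ` with
`|ρ_new - ρ*| ≤ γ|ρ - ρ*|`. With `m = max{ρ*, |ρ|}` and
`l = 1 - (1-γ)(1-m²)²/(1+m²)`, one has `l < 1` and
`|Ξ(ρ_new, σ, σ') - Ξ(ρ*, σ, σ')| ≤ l·|Ξ(ρ, σ, σ') - Ξ(ρ*, σ, σ')|`. -/
theorem Xi_contraction_bound (σ σ' ρstar ρ γ ρnew m l : ℝ)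
    (hσ : 0 < σ) (hσ' : 0 < σ')
    (hρstar : ρstar ∈ Set.Ico (0 : ℝ) 1)
    (hρ : ρ ∈ Set.Ioo (-1 : ℝ) 1)
    (hγ : γ ∈ Set.Ico (0 : ℝ) 1)
    (hρnew : ρnew ∈ Set.Ioo (-1 : ℝ) 1)
    (hseg : ρnew ∈ Set.uIcc ρstar ρ)
    (hcontr : |ρnew - ρstar| ≤ γ * |ρ - ρstar|)
    (hm : m = max ρstar |ρ|)
    (hl : l = 1 - (1 - γ) * (1 - m ^ 2) ^ 2 / (1 + m ^ 2)) :
    l < 1 ∧ |Xi ρnew σ σ' - Xi ρstar σ σ'| ≤ l * |Xi ρ σ σ' - Xi ρstar σ σ'| := by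
  obtain ⟨hs0, hs1⟩ := hρstar
  obtain ⟨hr0, hr1⟩ := hρ
  obtain ⟨hg0, hg1⟩ := hγ
  obtain ⟨hn0, hn1⟩ := hρnew
  have hm0 : 0 ≤ m := hm ▸ le_trans hs0 (le_max_left _ _)
  have hm1 : m < 1 := by
    rw [hm]
    exact max_lt hs1 (abs_lt.2 ⟨hr0, hr1⟩)
  have hm2 : m ^ 2 < 1 := by nlinarith
  have hsq : ρstar ^ 2 < 1 := by nlinarith
  have hrq : ρ ^ 2 < 1 := by nlinarith
  have hnq : ρnew ^ 2 < 1 := by nlinarith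
  have hsm : ρstar ^ 2 ≤ m ^ 2 := by
    have : ρstar ≤ m := hm ▸ le_max_left _ _
    nlinarith
  have hrm : ρ ^ 2 ≤ m ^ 2 := by
    have h' : |ρ| ≤ m := hm ▸ le_max_right _ _
    nlinarith [abs_nonneg ρ, sq_abs ρ]
  -- positivity facts
  have hden : 0 < 1 + m ^ 2 := by positivity
  have hmsq : 0 < (1 - m ^ 2) ^ 2 := by nlinarith
  have h1l : 1 - l = (1 - γ) * (1 - m ^ 2) ^ 2 / (1 + m ^ 2) := by rw [hl]; ring
  have hlpos : 0 < 1 - l := by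
    rw [h1l]; exact div_pos (mul_pos (by linarith) hmsq) hden
  refine ⟨by linarith, ?_⟩
  -- splitting via same-sign
  have hmid : 0 ≤ (ρ - ρnew) * (ρnew - ρstar) := by
    rcases Set.mem_uIcc.1 hseg with ⟨h1, h2⟩ | ⟨h1, h2⟩
    · exact mul_nonneg (by linarith) (by linarith)
    · have h := mul_nonneg (show (0:ℝ) ≤ ρnew - ρ by linarith)
        (show (0:ℝ) ≤ ρstar - ρnew by linarith)
      nlinarith [h]
  have hp1 : 0 < 1 + ρ * ρnew := by nlinarith [sq_nonneg (ρ + ρnew)]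
  have hp2 : 0 < 1 + ρnew * ρstar := by nlinarith [sq_nonneg (ρnew + ρstar)]
  have hd1 : 0 < 1 - ρ ^ 2 := by linarith
  have hd2 : 0 < 1 - ρnew ^ 2 := by linarith
  have hd3 : 0 < 1 - ρstar ^ 2 := by linarith
  have hsign : 0 ≤ (ρ / (1 - ρ ^ 2) - ρnew / (1 - ρnew ^ 2)) * (ρnew / (1 - ρnew ^ 2) - ρstar / (1 - ρstar ^ 2)) := by
    have heq : (ρ / (1 - ρ ^ 2) - ρnew / (1 - ρnew ^ 2)) * (ρnew / (1 - ρnew ^ 2) - ρstar / (1 - ρstar ^ 2))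
        = ((ρ - ρnew) * (ρnew - ρstar))
          * ((1 + ρ * ρnew) * (1 + ρnew * ρstar)
            / ((1 - ρ ^ 2) * (1 - ρnew ^ 2) * ((1 - ρnew ^ 2) * (1 - ρstar ^ 2)))) := by
      rw [fdiff ρ ρnew hrq hnq, fdiff ρnew ρstar hnq hsq]
      field_simp
    rw [heq]
    exact mul_nonneg hmid (le_of_lt (div_pos (mul_pos hp1 hp2)
      (mul_pos (mul_pos hd1 hd2) (mul_pos hd2 hd3))))
  have hsplit : |ρ / (1 - ρ ^ 2) - ρstar / (1 - ρstar ^ 2)| = |ρ / (1 - ρ ^ 2) - ρnew / (1 - ρnew ^ 2)| + |ρnew / (1 - ρnew ^ 2) - ρstar / (1 - ρstar ^ 2)| := by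
    have : ρ / (1 - ρ ^ 2) - ρstar / (1 - ρstar ^ 2) = (ρ / (1 - ρ ^ 2) - ρnew / (1 - ρnew ^ 2)) + (ρnew / (1 - ρnew ^ 2) - ρstar / (1 - ρstar ^ 2)) := by ring
    rw [this, abs_add_same_sign _ _ hsign]
  rw [add_comm] at hsplit
  set A := |ρnew / (1 - ρnew ^ 2) - ρstar / (1 - ρstar ^ 2)|
  set B := |ρ / (1 - ρ ^ 2) - ρnew / (1 - ρnew ^ 2)|
  -- lower bound for B
  have hB : (1 - γ) * |ρ - ρstar| ≤ B := by
    have h1 : |ρ - ρnew| ≤ B := lower_bound ρ ρnew hrq hnq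
    have h2 : |ρ - ρstar| ≤ |ρ - ρnew| + |ρnew - ρstar| := by
      calc |ρ - ρstar| = |(ρ - ρnew) + (ρnew - ρstar)| := by ring_nf
        _ ≤ |ρ - ρnew| + |ρnew - ρstar| := abs_add_le _ _
    nlinarith
  -- upper bound for A + B
  have hAB : A + B ≤ (1 + m ^ 2) / (1 - m ^ 2) ^ 2 * |ρ - ρstar| := by
    rw [← hsplit]
    exact upper_bound ρ ρstar m hm2 hrm hsm
  -- key scalar inequality
  have hK : (1 - l) * ((1 + m ^ 2) / (1 - m ^ 2) ^ 2) = 1 - γ := by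
    rw [h1l]
    field_simp
    exact div_self (by nlinarith)
  have hkey : A ≤ l * (A + B) := by
    have h3 : (1 - l) * (A + B) ≤ (1 - l) * ((1 + m ^ 2) / (1 - m ^ 2) ^ 2 * |ρ - ρstar|) :=
      mul_le_mul_of_nonneg_left hAB hlpos.le
    rw [← mul_assoc, hK] at h3
    nlinarith
  -- transfer to Xi
  have hc : 0 < σ * σ' := mul_pos hσ hσ'
  have e1 : |Xi ρnew σ σ' - Xi ρstar σ σ'| = A / (σ * σ') := by
    rw [Xi_eq, Xi_eq, ← sub_div, abs_div, abs_of_pos hc]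
  have e2 : |Xi ρ σ σ' - Xi ρstar σ σ'| = (A + B) / (σ * σ') := by
    rw [Xi_eq, Xi_eq, ← sub_div, abs_div, abs_of_pos hc, ← hsplit]
  rw [e1, e2, ← mul_div_assoc]
  exact (div_le_div_iff_of_pos_right hc).2 hkey
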